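/- arXiv:1903.11655 — 2 statements merged into one kernel-verified Lean document; each statement's English description precedes it below -/
import Mathlib

section
/- Let M be a topological manifold modeled on a topological left module X over a topological ring F, possessing an atlas all of whose charts are homeomorphic to X. Then the diagonal map Δ: M → M×M together with the first projection π₁: M×M → M forms a microbundle with base M, total space M×M, injection Δ, and projection π₁; i.e., π₁ ∘ Δ = id, and for each m ∈ M there exist a neighborhood U of m and a homeomorphism g: U×U → U×X such that π₁ ∘ g = π₁ on U×U, g ∘ Δ|_U = (x ↦ (x,0)), and the required compatibility π₁ ∘ ι₀ = π₁ ∘ Δ holds on U. -/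
/-- Given a chart `f : U ≃ₜ X`, the map `(x,y) ↦ (x, f y - f x)` is a homeomorphism. -/
def chartShift {U X : Type*} [TopologicalSpace U] [TopologicalSpace X] [AddCommGroup X]
    [IsTopologicalAddGroup X] (f : U ≃ₜ X) : (U × U) ≃ₜ (U × X) where
  toFun p := (p.1, f p.2 - f p.1)
  invFun p := (p.1, f.symm (p.2 + f p.1))
  left_inv p := by simp
  right_inv p := by simp
  continuous_toFun := by
    refine Continuous.prodMk continuous_fst ?_
    exact (f.continuous.comp continuous_snd).sub (f.continuous.comp continuous_fst)
  continuous_invFun := by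
    refine Continuous.prodMk continuous_fst ?_
    exact f.symm.continuous.comp (continuous_snd.add (f.continuous.comp continuous_fst))

/-- For a topological manifold `M` modeled on a topological left module `X`
over a topological ring `F`, possessing an atlas all of whose charts are homeomorphic to `X`,
the diagonal map together with the first projection forms a microbundle: `π₁ ∘ Δ = id`, and
for each `m` there are a neighborhood `U` of `m` and a homeomorphism `g : U × U ≃ₜ U × X`
with `π₁ ∘ g = π₁`, `g ∘ Δ|_U = ι₀` (the zero section), hence `π₁ ∘ ι₀ = π₁ ∘ Δ` on `U`. -/
theorem stmt0 (F M X : Type*) [Ring F] [TopologicalSpace F] [IsTopologicalRing F]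
    [TopologicalSpace M] [AddCommGroup X] [Module F X] [TopologicalSpace X]
    [IsTopologicalAddGroup X] [ContinuousSMul F X]
    (hatlas : ∀ m : M, ∃ U : Set M, IsOpen U ∧ m ∈ U ∧ Nonempty (U ≃ₜ X)) :
    ((fun m : M => ((m, m) : M × M).1) = id) ∧
    ∀ m : M, ∃ U : Set M, IsOpen U ∧ m ∈ U ∧
      ∃ g : (U × U) ≃ₜ (U × X),
        (∀ x y : U, (g (x, y)).1 = x) ∧
        (∀ x : U, g (x, x) = (x, (0 : X))) ∧
        (∀ x : U, (g (x, x)).1 = ((x, x) : U × U).1) := by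
  refine ⟨rfl, fun m => ?_⟩
  obtain ⟨U, hUo, hmU, ⟨f⟩⟩ := hatlas m
  exact ⟨U, hUo, hmU, chartShift f, fun x y => rfl,
    fun x => by simp [chartShift], fun x => rfl⟩
end

section
/- Let F be a ring with a topology induced by a nontrivial norm such that F is zero-dimensional (dim F = 0). Then the closed unit ball B(F,0,1) = {t ∈ F : |t| ≤ 1} can be partitioned into two disjoint clopen subsets K₀ and K₁ with 0 ∈ K₀ and 1 ∈ K₁. Consequently, for any continuous f: A₁ → A, the mapping cone A ∪_f CA₁ is the disjoint union of the clopen subsets A₂ = (A ∪ (A₁ × K₁))/Ξ_f and A₃ = (A₁ × K₀)/(A₁ × {0}). -/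
/-- The closed unit ball `B(F,0,1)` of a ring with a norm-like function `v`. -/
def unitBall {F : Type*} [TopologicalSpace F] (v : F → ℝ) : Type _ := {t : F // v t ≤ 1}

instance {F : Type*} [TopologicalSpace F] (v : F → ℝ) : TopologicalSpace (unitBall v) :=
  instTopologicalSpaceSubtype

/-- The relation generating the mapping cone `A ∪_f CA₁`. -/
def mapConeRel {F A A₁ : Type*} [TopologicalSpace F] [Zero F] [One F] (v : F → ℝ)
    (f : A₁ → A) :
    (A ⊕ (A₁ × unitBall v)) → (A ⊕ (A₁ × unitBall v)) → Prop := fun x y =>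
  (∃ (a a' : A₁) (b b' : unitBall v), b.1 = 0 ∧ b'.1 = 0 ∧
      x = Sum.inr (a, b) ∧ y = Sum.inr (a', b')) ∨
  (∃ (a : A₁) (b : unitBall v), b.1 = 1 ∧ x = Sum.inr (a, b) ∧ y = Sum.inl (f a))

/-- The mapping cone `A ∪_f CA₁` over the ring `F`. -/
def MapCone {F A A₁ : Type*} [TopologicalSpace F] [Zero F] [One F] (v : F → ℝ)
    (f : A₁ → A) : Type _ :=
  Quot (mapConeRel v f)

instance {F A A₁ : Type*} [TopologicalSpace F] [Zero F] [One F] [TopologicalSpace A]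
    [TopologicalSpace A₁] (v : F → ℝ) (f : A₁ → A) : TopologicalSpace (MapCone v f) :=
  instTopologicalSpaceQuot

/-- If `F` is a zero-dimensional ring with topology induced by a nontrivial
norm `v`, then the closed unit ball `B(F,0,1)` is partitioned into disjoint clopen sets
`K₀ ∋ 0` and `K₁ ∋ 1`; consequently for any continuous `f : A₁ → A` the mapping cone
`A ∪_f CA₁` is the disjoint union of the clopen subsets
`A₂ = (A ∪ (A₁ × K₁))/Ξ_f` and `A₃ = (A₁ × K₀)/(A₁ × {0})`. -/
theorem stmt5 {F A A₁ : Type*} [Ring F] [tF : TopologicalSpace F] [IsTopologicalRing F]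
    [TopologicalSpace A] [TopologicalSpace A₁]
    (v : F → ℝ)
    (htop : tF = TopologicalSpace.induced v inferInstance)
    (hnn : ∀ x : F, 0 ≤ v x) (hv0 : v 0 = 0) (hv1 : v 1 = 1)
    (hnontriv : ∃ b : F, v b ≠ 0 ∧ v b ≠ 1)
    (hzero : ∀ U : Set F, IsOpen U → ∀ x ∈ U, ∃ C : Set F, IsClopen C ∧ x ∈ C ∧ C ⊆ U)
    (f : A₁ → A) (hf : Continuous f) :
    ∃ K₀ K₁ : Set (unitBall v),
      IsClopen K₀ ∧ IsClopen K₁ ∧ K₀ ∩ K₁ = ∅ ∧ K₀ ∪ K₁ = Set.univ ∧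
      (⟨(0 : F), by rw [hv0]; exact zero_le_one⟩ : unitBall v) ∈ K₀ ∧
      (⟨(1 : F), by rw [hv1]⟩ : unitBall v) ∈ K₁ ∧
      (let A₂ : Set (MapCone v f) := Quot.mk (mapConeRel v f) ''
          (Set.range Sum.inl ∪ Sum.inr '' {q : A₁ × unitBall v | q.2 ∈ K₁});
       let A₃ : Set (MapCone v f) := Quot.mk (mapConeRel v f) ''
          (Sum.inr '' {q : A₁ × unitBall v | q.2 ∈ K₀});
       IsClopen A₂ ∧ IsClopen A₃ ∧ A₂ ∩ A₃ = ∅ ∧ A₂ ∪ A₃ = Set.univ) := by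
  classical
  -- an open set of `F` containing 0 but not 1
  have hUopen : IsOpen {x : F | v x < 1} := by
    rw [htop, isOpen_induced_iff]
    exact ⟨Set.Iio 1, isOpen_Iio, rfl⟩
  obtain ⟨C, hC, hC0, hCsub⟩ := hzero _ hUopen 0 (by simp [Set.mem_setOf_eq, hv0])
  have h1C : (1 : F) ∉ C := fun h => by simpa [hv1] using hCsub h
  -- the inclusion of the unit ball
  have hval : Continuous (fun b : unitBall v => b.1) := continuous_subtype_val
  set K₀ : Set (unitBall v) := (fun b : unitBall v => b.1) ⁻¹' C with hK₀def
  have hK₀ : IsClopen K₀ := hC.preimage hval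
  refine ⟨K₀, K₀ᶜ, hK₀, hK₀.compl, by simp, by simp, hC0, h1C, ?_⟩
  intro A₂ A₃
  -- basic membership facts
  have hb0 : ∀ b : unitBall v, b.1 = 0 → b ∈ K₀ := fun b hb => by
    simp only [hK₀def, Set.mem_preimage, hb]; exact hC0
  have hb1 : ∀ b : unitBall v, b.1 = 1 → b ∉ K₀ := fun b hb => by
    simp only [hK₀def, Set.mem_preimage, hb]; exact h1C
  -- the invariant function
  set φ : (A ⊕ (A₁ × unitBall v)) → Prop :=
    Sum.elim (fun _ => False) (fun q => q.2 ∈ K₀) with hφdef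
  have hφ : ∀ x y, mapConeRel v f x y → φ x = φ y := by
    rintro x y (⟨a, a', b, b', hb, hb', rfl, rfl⟩ | ⟨a, b, hb, rfl, rfl⟩)
    · simp only [hφdef, Sum.elim_inr]
      exact propext ⟨fun _ => hb0 b' hb', fun _ => hb0 b hb⟩
    · simp only [hφdef, Sum.elim_inr, Sum.elim_inl]
      exact propext ⟨fun h => (hb1 b hb h), fun h => h.elim⟩
  set g : MapCone v f → Prop := Quot.lift φ hφ with hgdef
  have hg : ∀ x, g (Quot.mk (mapConeRel v f) x) = φ x := fun x => rfl
  -- saturated sets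
  set S₂ : Set (A ⊕ (A₁ × unitBall v)) :=
    Set.range Sum.inl ∪ Sum.inr '' {q : A₁ × unitBall v | q.2 ∈ K₀ᶜ} with hS₂def
  set S₃ : Set (A ⊕ (A₁ × unitBall v)) :=
    Sum.inr '' {q : A₁ × unitBall v | q.2 ∈ K₀} with hS₃def
  have hmemS₃ : ∀ x, x ∈ S₃ ↔ φ x := by
    rintro (a | q)
    · simp [hS₃def, hφdef]
    · simp only [hS₃def, hφdef, Set.mem_image, Sum.elim_inr, Set.mem_setOf_eq]
      constructor
      · rintro ⟨q', hq', h⟩; rw [Sum.inr.injEq] at h; exact h ▸ hq'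
      · exact fun h => ⟨q, h, rfl⟩
  have hmemS₂ : ∀ x, x ∈ S₂ ↔ ¬ φ x := by
    rintro (a | q)
    · simp [hS₂def, hφdef]
    · simp only [hS₂def, hφdef, Set.mem_union, Set.mem_range, Set.mem_image,
        Sum.elim_inr, Set.mem_setOf_eq]
      constructor
      · rintro (⟨a, h⟩ | ⟨q', hq', h⟩)
        · exact absurd h (by simp)
        · rw [Sum.inr.injEq] at h; exact h ▸ hq'
      · exact fun h => Or.inr ⟨q, h, rfl⟩
  -- preimage computations
  have hpre₃ : Quot.mk (mapConeRel v f) ⁻¹' A₃ = S₃ := by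
    ext x
    simp only [Set.mem_preimage, A₃, Set.mem_image]
    constructor
    · rintro ⟨y, hy, hxy⟩
      have : φ y = φ x := by
        have := congrArg g hxy
        rwa [hg, hg] at this
      rw [hmemS₃, ← this, ← hmemS₃]
      exact hy
    · exact fun h => ⟨x, h, rfl⟩
  have hpre₂ : Quot.mk (mapConeRel v f) ⁻¹' A₂ = S₂ := by
    ext x
    simp only [Set.mem_preimage, A₂, Set.mem_image]
    constructor
    · rintro ⟨y, hy, hxy⟩
      have heq : φ y = φ x := by
        have := congrArg g hxy
        rwa [hg, hg] at this
      rw [hmemS₂, ← heq, ← hmemS₂]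
      exact hy
    · exact fun h => ⟨x, h, rfl⟩
  -- clopenness of S₂ and S₃
  have hK₀p : IsClopen ((fun q : A₁ × unitBall v => q.2) ⁻¹' K₀) :=
    hK₀.preimage continuous_snd
  have hS₃clopen : IsClopen S₃ := by
    rw [hS₃def]
    exact ⟨Topology.IsClosedEmbedding.inr.isClosedMap _ hK₀p.isClosed,
      Topology.IsOpenEmbedding.inr.isOpenMap _ hK₀p.isOpen⟩
  have hS₂clopen : IsClopen S₂ := by
    rw [hS₂def]
    have h1 : IsClopen (Set.range (Sum.inl : A → A ⊕ (A₁ × unitBall v))) :=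
      ⟨isClosed_range_inl, isOpen_range_inl⟩
    have h2 : IsClopen ((Sum.inr : (A₁ × unitBall v) → A ⊕ (A₁ × unitBall v)) '' {q : A₁ × unitBall v | q.2 ∈ K₀ᶜ}) :=
      ⟨Topology.IsClosedEmbedding.inr.isClosedMap _ (hK₀p.compl.isClosed),
        Topology.IsOpenEmbedding.inr.isOpenMap _ (hK₀p.compl.isOpen)⟩
    exact h1.union h2
  -- clopenness in the quotient
  have hopen : ∀ (T : Set (MapCone v f)),
      IsOpen (Quot.mk (mapConeRel v f) ⁻¹' T) → IsOpen T := fun T h => h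
  have hA₂clopen : IsClopen A₂ := by
    constructor
    · rw [← isOpen_compl_iff]
      apply hopen
      have : Quot.mk (mapConeRel v f) ⁻¹' A₂ᶜ = S₂ᶜ := by
        exact congrArg (fun T : Set (A ⊕ (A₁ × unitBall v)) => Tᶜ) hpre₂
      refine (congrArg IsOpen this).mpr ?_
      exact hS₂clopen.compl.isOpen
    · apply hopen; rw [hpre₂]; exact hS₂clopen.isOpen
  have hA₃clopen : IsClopen A₃ := by
    constructor
    · rw [← isOpen_compl_iff]
      apply hopen
      have : Quot.mk (mapConeRel v f) ⁻¹' A₃ᶜ = S₃ᶜ := by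
        exact congrArg (fun T : Set (A ⊕ (A₁ × unitBall v)) => Tᶜ) hpre₃
      refine (congrArg IsOpen this).mpr ?_
      exact hS₃clopen.compl.isOpen
    · apply hopen; rw [hpre₃]; exact hS₃clopen.isOpen
  refine ⟨hA₂clopen, hA₃clopen, ?_, ?_⟩
  · ext z
    simp only [Set.mem_inter_iff, Set.mem_empty_iff_false, iff_false, not_and]
    intro h2 h3
    obtain ⟨x, rfl⟩ := Quot.exists_rep z
    have h2' : x ∈ S₂ := by rw [← hpre₂]; exact h2
    have h3' : x ∈ S₃ := by rw [← hpre₃]; exact h3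
    exact (hmemS₂ x).mp h2' ((hmemS₃ x).mp h3')
  · rw [Set.eq_univ_iff_forall]
    intro z
    obtain ⟨x, rfl⟩ := Quot.exists_rep z
    by_cases h : φ x
    · exact Or.inr ⟨x, (hmemS₃ x).mpr h, rfl⟩
    · left
      refine ⟨x, ?_, rfl⟩
      have := (hmemS₂ x).mpr h
      rwa [hS₂def] at this
end
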